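/- Let (g, ≺) be a maximally delayed gflow of an open graph (G, I, O). Then the last layer V_0^≺ equals the output set O. -/

import Mathlib

variable {V : Type*} [Fintype V] [DecidableEq V]

/-- The odd neighborhood of a vertex set `S`: vertices adjacent to an odd
number of vertices of `S`. -/
def oddNbhd (G : SimpleGraph V) [DecidableRel G.Adj] (S : Finset V) : Finset V :=
  Finset.univ.filter fun v => Odd ((S.filter fun u => G.Adj v u).card)

/-- A generalized flow (gflow) on the open graph `(G, I, O)`. -/
structure IsGflow (G : SimpleGraph V) [DecidableRel G.Adj] (I O : Finset V)
    (g : V → Finset V) (r : V → V → Prop) : Prop where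
  strict : IsStrictOrder V r
  notInput : ∀ u, u ∉ O → ∀ v ∈ g u, v ∉ I
  g1 : ∀ u, u ∉ O → ∀ v ∈ g u, r u v
  g2 : ∀ u, u ∉ O → u ∈ oddNbhd G (g u)
  g3 : ∀ u, u ∉ O → ∀ v ∈ oddNbhd G (g u), v = u ∨ r u v

/-- `maxSet r X` is the set of `r`-maximal elements of `X`. -/
noncomputable def maxSet (r : V → V → Prop) (X : Finset V) : Finset V :=
  @Finset.filter _ (fun u => ∀ v ∈ X, ¬ r u v) (Classical.decPred _) X

/-- Union of the first `k` layers of the strict partial order `r`. -/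
noncomputable def usedUpTo (r : V → V → Prop) : ℕ → Finset V
  | 0 => ∅
  | k + 1 => usedUpTo r k ∪ maxSet r (Finset.univ \ usedUpTo r k)

/-- The `k`-th layer `V_k^≺`, obtained by iterated maximization. -/
noncomputable def layer (r : V → V → Prop) (k : ℕ) : Finset V :=
  maxSet r (Finset.univ \ usedUpTo r k)

/-- `(·, r)` is more delayed than `(·, r')`. -/
noncomputable def MoreDelayed (r r' : V → V → Prop) : Prop :=
  (∀ k, (usedUpTo r' (k + 1)).card ≤ (usedUpTo r (k + 1)).card) ∧
  ∃ k, (usedUpTo r' (k + 1)).card < (usedUpTo r (k + 1)).card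

/-- A gflow is maximally delayed if no gflow of the same open graph is more
delayed than it. -/
noncomputable def MaximallyDelayed (G : SimpleGraph V) [DecidableRel G.Adj]
    (I O : Finset V) (g : V → Finset V) (r : V → V → Prop) : Prop :=
  IsGflow G I O g r ∧
    ∀ (g' : V → Finset V) (r' : V → V → Prop), IsGflow G I O g' r' →
      ¬ MoreDelayed r' r

omit [Fintype V] [DecidableEq V] in
lemma mem_maxSet {r : V → V → Prop} {X : Finset V} {u : V} :
    u ∈ maxSet r X ↔ u ∈ X ∧ ∀ v ∈ X, ¬ r u v :=
  @Finset.mem_filter _ _ (Classical.decPred _) _ _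

/-- If `r'` is a subrelation of `r`, then the cumulative layers for `r` are
contained in those for `r'`. -/
lemma usedUpTo_subset_of_subrel {r r' : V → V → Prop}
    (hsub : ∀ u v, r' u v → r u v) : ∀ k, usedUpTo r k ⊆ usedUpTo r' k := by
  intro k
  induction k with
  | zero => simp [usedUpTo]
  | succ k ih =>
    intro u hu
    rw [usedUpTo, Finset.mem_union] at hu ⊢
    rcases hu with hu | hu
    · exact Or.inl (ih hu)
    · rw [mem_maxSet] at hu
      obtain ⟨hu1, hu2⟩ := hu
      by_cases hu' : u ∈ usedUpTo r' k
      · exact Or.inl hu'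
      · refine Or.inr ?_
        rw [mem_maxSet]
        refine ⟨Finset.mem_sdiff.mpr ⟨Finset.mem_univ u, hu'⟩, fun v hv hrv => ?_⟩
        have hv' : v ∈ Finset.univ \ usedUpTo r k := by
          rw [Finset.mem_sdiff] at hv ⊢
          exact ⟨Finset.mem_univ v, fun hvk => hv.2 (ih hvk)⟩
        exact hu2 v hv' (hsub u v hrv)

theorem maximallyDelayed_layer_zero (G : SimpleGraph V) [DecidableRel G.Adj]
    (I O : Finset V) (g : V → Finset V) (r : V → V → Prop)
    (h : MaximallyDelayed G I O g r) : layer r 0 = O := by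
  obtain ⟨hg, hmax⟩ := h
  apply Finset.Subset.antisymm
  · -- layer r 0 ⊆ O
    intro u hu
    by_contra huO
    rw [layer, mem_maxSet] at hu
    obtain ⟨-, humax⟩ := hu
    have h2 := hg.g2 u huO
    simp only [oddNbhd, Finset.mem_filter, Finset.mem_univ, true_and] at h2
    obtain ⟨v, hv⟩ := Finset.card_pos.mp h2.pos
    have hv' := (Finset.mem_filter.mp hv).1
    exact humax v (by simp [usedUpTo]) (hg.g1 u huO v hv')
  · -- O ⊆ layer r 0
    intro o hoO
    by_contra ho
    -- build the restricted relation
    set r' : V → V → Prop := fun u v => r u v ∧ u ∉ O with hr'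
    have hsub : ∀ u v, r' u v → r u v := fun u v hv => hv.1
    have hg' : IsGflow G I O g r' := by
      refine { strict := ?_, notInput := hg.notInput,
               g1 := fun u huO v hv => ⟨hg.g1 u huO v hv, huO⟩,
               g2 := hg.g2, g3 := ?_ }
      · exact { toIrrefl := ⟨fun a ha => hg.strict.toIrrefl.irrefl a ha.1⟩,
                toIsTrans := ⟨fun a b c hab hbc =>
                  ⟨hg.strict.toIsTrans.trans a b c hab.1 hbc.1, hab.2⟩⟩ }
      · intro u huO v hv
        rcases hg.g3 u huO v hv with heq | hr
        · exact Or.inl heq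
        · exact Or.inr ⟨hr, huO⟩
    apply hmax g r' hg'
    constructor
    · intro k
      exact Finset.card_le_card (usedUpTo_subset_of_subrel hsub (k + 1))
    · refine ⟨0, Finset.card_lt_card ?_⟩
      rw [Finset.ssubset_iff_of_subset (usedUpTo_subset_of_subrel hsub 1)]
      refine ⟨o, ?_, ?_⟩
      · -- o is r'-maximal since o ∈ O
        simp only [usedUpTo, Finset.empty_union]
        rw [mem_maxSet]
        exact ⟨by simp, fun v _ hrv => hrv.2 hoO⟩
      · -- o ∉ usedUpTo r 1 since o ∉ layer r 0
        simp only [usedUpTo, Finset.empty_union]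
        simpa only [layer, usedUpTo] using ho
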